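/- For every integer g ≥ 1 the function j ↦ R(g,j) is strictly decreasing on {0,1,…,⌊(g−1)/2⌋}; that is, R(g,j+1) < R(g,j) for every integer j with 0 ≤ j ≤ ⌊(g−1)/2⌋ − 1. -/

import Mathlib

open Nat Real Filter

/-- `R(g,j) = C(3g,3j)·C(g,j)/C(6g,6j)`. -/
noncomputable def R (g j : ℕ) : ℚ :=
  (((3 * g).choose (3 * j) : ℚ) * (g.choose j : ℚ)) / ((6 * g).choose (6 * j) : ℚ)

lemma cQhelper (n k : ℕ) (h : k ≤ n) :
    (n.choose (k+1) : ℚ) * ((k:ℚ)+1) = (n.choose k : ℚ) * ((n:ℚ) - (k:ℚ)) := by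
  have h2 : ((n.choose (k+1) * (k+1) : ℕ) : ℚ) = ((n.choose k * (n-k) : ℕ) : ℚ) := by
    exact_mod_cast congrArg (Nat.cast (R := ℚ)) (Nat.choose_succ_right_eq n k)
  push_cast [Nat.cast_sub h] at h2
  linarith

lemma keyineq (t x : ℚ) (ht : 0 ≤ t) (hx : t + 3 ≤ x) :
    (3*x)*(3*x-1)*(3*x-2)*x*((6*t+1)*(6*t+2)*(6*t+3)*(6*t+4)*(6*t+5)*(6*t+6)) <
    ((6*x)*(6*x-1)*(6*x-2)*(6*x-3)*(6*x-4)*(6*x-5))*((3*t+1)*(3*t+2)*(3*t+3)*(t+1)) := by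
  have h1 : 3*x*((2*t+1)*(6*t+1)*(6*t+5)) < (t+1)*((6*x-1)*(6*x-3)*(6*x-5)) := by
    nlinarith [mul_nonneg ht (sub_nonneg.2 hx), sq_nonneg (x-t-3),
      mul_nonneg (mul_nonneg ht ht) (sub_nonneg.2 hx), mul_nonneg ht (mul_nonneg ht ht),
      sq_nonneg (x-t), mul_nonneg (mul_nonneg ht ht) ht]
  have a0 : (0:ℚ) < 72*x := by linarith
  have a1 : (0:ℚ) < 3*x-1 := by linarith
  have a2 : (0:ℚ) < 3*x-2 := by linarith
  have a3 : (0:ℚ) < 3*t+1 := by linarith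
  have a4 : (0:ℚ) < 3*t+2 := by linarith
  have a5 : (0:ℚ) < t+1 := by linarith
  have hG : (0:ℚ) < 72*x*(3*x-1)*(3*x-2)*((3*t+1)*(3*t+2)*(t+1)) :=
    mul_pos (mul_pos (mul_pos a0 a1) a2) (mul_pos (mul_pos a3 a4) a5)
  calc (3*x)*(3*x-1)*(3*x-2)*x*((6*t+1)*(6*t+2)*(6*t+3)*(6*t+4)*(6*t+5)*(6*t+6))
      = (72*x*(3*x-1)*(3*x-2)*((3*t+1)*(3*t+2)*(t+1))) * (3*x*((2*t+1)*(6*t+1)*(6*t+5))) := by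
        ring
    _ < (72*x*(3*x-1)*(3*x-2)*((3*t+1)*(3*t+2)*(t+1))) * ((t+1)*((6*x-1)*(6*x-3)*(6*x-5))) :=
        mul_lt_mul_of_pos_left h1 hG
    _ = ((6*x)*(6*x-1)*(6*x-2)*(6*x-3)*(6*x-4)*(6*x-5))*((3*t+1)*(3*t+2)*(3*t+3)*(t+1)) := by
        ring

theorem stmt11 (g : ℕ) (hg : 1 ≤ g) (j : ℕ) (hj : j + 1 ≤ (g - 1) / 2) :
    R g (j + 1) < R g j := by
  have hg2 : 2*j + 3 ≤ g := by omega
  set J : ℚ := (j : ℚ) with hJ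
  set G : ℚ := (g : ℚ) with hG
  have hJ0 : 0 ≤ J := by positivity
  have hGJ : J + 3 ≤ G - J := by
    have : ((2*j+3 : ℕ) : ℚ) ≤ ((g:ℕ) : ℚ) := by exact_mod_cast hg2
    push_cast at this; simp only [hJ, hG]; linarith
  -- positivity of binomials
  have hc : (0:ℚ) < ((6*g).choose (6*j) : ℚ) := by
    exact_mod_cast Nat.choose_pos (by omega : 6*j ≤ 6*g)
  have hc' : (0:ℚ) < ((6*g).choose (6*(j+1)) : ℚ) := by
    exact_mod_cast Nat.choose_pos (by omega : 6*(j+1) ≤ 6*g)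
  have ha0 : (0:ℚ) < ((3*g).choose (3*j) : ℚ) := by
    exact_mod_cast Nat.choose_pos (by omega : 3*j ≤ 3*g)
  have hb0 : (0:ℚ) < (g.choose j : ℚ) := by
    exact_mod_cast Nat.choose_pos (by omega : j ≤ g)
  -- step identities
  have ha1 := cQhelper (3*g) (3*j) (by omega)
  have ha2 := cQhelper (3*g) (3*j+1) (by omega)
  have ha3 := cQhelper (3*g) (3*j+2) (by omega)
  have HB := cQhelper g j (by omega)
  have hc1 := cQhelper (6*g) (6*j) (by omega)
  have hc2 := cQhelper (6*g) (6*j+1) (by omega)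
  have hc3 := cQhelper (6*g) (6*j+2) (by omega)
  have hc4 := cQhelper (6*g) (6*j+3) (by omega)
  have hc5 := cQhelper (6*g) (6*j+4) (by omega)
  have hc6 := cQhelper (6*g) (6*j+5) (by omega)
  push_cast at ha1 ha2 ha3 HB hc1 hc2 hc3 hc4 hc5 hc6
  have HA : ((3*g).choose (3*j+2+1) : ℚ) * ((3*J+1)*(3*J+2)*(3*J+3)) =
      ((3*g).choose (3*j) : ℚ) * ((3*G-3*J)*(3*G-3*J-1)*(3*G-3*J-2)) := by
    linear_combination ((3*J+1)*(3*J+2))*ha3 + ((3*J+1)*(3*G-3*J-2))*ha2 +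
      ((3*G-3*J-1)*(3*G-3*J-2))*ha1
  have HC : ((6*g).choose (6*j+5+1) : ℚ) *
      ((6*J+1)*(6*J+2)*(6*J+3)*(6*J+4)*(6*J+5)*(6*J+6)) =
      ((6*g).choose (6*j) : ℚ) *
      ((6*G-6*J)*(6*G-6*J-1)*(6*G-6*J-2)*(6*G-6*J-3)*(6*G-6*J-4)*(6*G-6*J-5)) := by
    linear_combination
      ((6*J+1)*(6*J+2)*(6*J+3)*(6*J+4)*(6*J+5))*hc6 +
      ((6*J+1)*(6*J+2)*(6*J+3)*(6*J+4)*(6*G-6*J-5))*hc5 +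
      ((6*J+1)*(6*J+2)*(6*J+3)*(6*G-6*J-4)*(6*G-6*J-5))*hc4 +
      ((6*J+1)*(6*J+2)*(6*G-6*J-3)*(6*G-6*J-4)*(6*G-6*J-5))*hc3 +
      ((6*J+1)*(6*G-6*J-2)*(6*G-6*J-3)*(6*G-6*J-4)*(6*G-6*J-5))*hc2 +
      ((6*G-6*J-1)*(6*G-6*J-2)*(6*G-6*J-3)*(6*G-6*J-4)*(6*G-6*J-5))*hc1
  have key := keyineq J (G - J) hJ0 hGJ
  simp only [R]
  rw [div_lt_div_iff₀ hc' hc]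
  have e3 : 3*(j+1) = 3*j+2+1 := by ring
  have e6 : 6*(j+1) = 6*j+5+1 := by ring
  rw [e3, e6] at *
  set a0 : ℚ := ((3*g).choose (3*j) : ℚ)
  set a3 : ℚ := ((3*g).choose (3*j+2+1) : ℚ)
  set b0 : ℚ := (g.choose j : ℚ)
  set b1 : ℚ := (g.choose (j+1) : ℚ)
  set c0 : ℚ := ((6*g).choose (6*j) : ℚ)
  set c6 : ℚ := ((6*g).choose (6*j+5+1) : ℚ)
  have hS : (0:ℚ) < ((3*J+1)*(3*J+2)*(3*J+3)) * (J+1) *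
      ((6*J+1)*(6*J+2)*(6*J+3)*(6*J+4)*(6*J+5)*(6*J+6)) := by positivity
  have habc : (0:ℚ) < a0*b0*c0 := mul_pos (mul_pos ha0 hb0) hc
  have big : a3 * b1 * c0 * (((3*J+1)*(3*J+2)*(3*J+3)) * (J+1) *
      ((6*J+1)*(6*J+2)*(6*J+3)*(6*J+4)*(6*J+5)*(6*J+6))) <
      a0 * b0 * c6 * (((3*J+1)*(3*J+2)*(3*J+3)) * (J+1) *
      ((6*J+1)*(6*J+2)*(6*J+3)*(6*J+4)*(6*J+5)*(6*J+6))) := by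
    have e1 : a3 * b1 * c0 * (((3*J+1)*(3*J+2)*(3*J+3)) * (J+1) *
        ((6*J+1)*(6*J+2)*(6*J+3)*(6*J+4)*(6*J+5)*(6*J+6))) =
        (a0*b0*c0) * ((3*(G-J))*(3*(G-J)-1)*(3*(G-J)-2)*(G-J)*
          ((6*J+1)*(6*J+2)*(6*J+3)*(6*J+4)*(6*J+5)*(6*J+6))) := by
      linear_combination (b1*(J+1)*c0*((6*J+1)*(6*J+2)*(6*J+3)*(6*J+4)*(6*J+5)*(6*J+6)))*HA +
        (a0*((3*G-3*J)*(3*G-3*J-1)*(3*G-3*J-2))*c0*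
          ((6*J+1)*(6*J+2)*(6*J+3)*(6*J+4)*(6*J+5)*(6*J+6)))*HB
    have e2 : a0 * b0 * c6 * (((3*J+1)*(3*J+2)*(3*J+3)) * (J+1) *
        ((6*J+1)*(6*J+2)*(6*J+3)*(6*J+4)*(6*J+5)*(6*J+6))) =
        (a0*b0*c0) * (((6*(G-J))*(6*(G-J)-1)*(6*(G-J)-2)*(6*(G-J)-3)*(6*(G-J)-4)*(6*(G-J)-5))*
          ((3*J+1)*(3*J+2)*(3*J+3)*(J+1))) := by
      linear_combination (a0*b0*((3*J+1)*(3*J+2)*(3*J+3))*(J+1))*HC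
    rw [e1, e2]
    exact mul_lt_mul_of_pos_left key habc
  exact (mul_lt_mul_iff_left₀ hS).mp big
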